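/- Fix an odd n and p ≥ 1/2. For any intersecting family F of subsets of {1,...,n}, p(F) ≤ p(F_{>n/2}), where F_{>n/2} is the family of all subsets of cardinality greater than n/2. -/

import Mathlib

/-- **Fishburn et al., favorable case.** Let `n` be odd and `1/2 ≤ p ≤ 1`. For any
intersecting family `F` of subsets of `{1,...,n}`, with `p(V) = p^|V| (1-p)^(n-|V|)`,
we have `p(F) ≤ p(F_{>n/2})` where `F_{>n/2}` is the family of subsets of cardinality
greater than `n/2`. -/
theorem intersecting_family_weight_le_majority (n : ℕ) (hn : Odd n) (p : ℝ)
    (hp : 1 / 2 ≤ p) (hp1 : p ≤ 1)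
    (F : Finset (Finset (Fin n)))
    (hF : ∀ A ∈ F, ∀ B ∈ F, (A ∩ B).Nonempty) :
    (∑ V ∈ F, p ^ V.card * (1 - p) ^ (n - V.card)) ≤
      ∑ V ∈ Finset.univ.filter (fun V : Finset (Fin n) => n < 2 * V.card),
        p ^ V.card * (1 - p) ^ (n - V.card) := by
  classical
  set q := 1 - p with hq
  have hq0 : 0 ≤ q := by simp [hq]; linarith
  have hp0 : 0 ≤ p := by linarith
  have hqp : q ≤ p := by simp only [hq]; linarith
  set w : Finset (Fin n) → ℝ := fun V => p ^ V.card * q ^ (n - V.card) with hw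
  set f : Finset (Fin n) → Finset (Fin n) :=
    fun V => if n < 2 * V.card then V else Vᶜ with hf
  have hcard : ∀ V : Finset (Fin n), Vᶜ.card = n - V.card := by
    intro V; simp [Finset.card_compl]
  have hVn : ∀ V : Finset (Fin n), V.card ≤ n := by
    intro V; simpa using V.card_le_univ
  have hmem : ∀ V, n < 2 * (f V).card := by
    intro V
    by_cases h : n < 2 * V.card
    · simpa [hf, h] using h
    · have h2 : 2 * V.card ≠ n := by
        intro he
        exact (Nat.not_even_iff_odd.mpr hn) ⟨V.card, by omega⟩
      have := hVn V
      simp only [hf, if_neg h, hcard]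
      omega
  have hwle : ∀ V, w V ≤ w (f V) := by
    intro V
    by_cases h : n < 2 * V.card
    · simp [hf, h]
    · have h2 : 2 * V.card ≤ n := not_lt.mp h
      have hVn' := hVn V
      simp only [hf, if_neg h, hw, hcard]
      have hnn : n - (n - V.card) = V.card := by omega
      rw [hnn]
      set k := V.card with hk
      calc p ^ k * q ^ (n - k)
          = (p ^ k * q ^ k) * q ^ (n - k - k) := by
            rw [mul_assoc, ← pow_add]
            congr 2
            omega
        _ ≤ (p ^ k * q ^ k) * p ^ (n - k - k) := by
            apply mul_le_mul_of_nonneg_left (pow_le_pow_left₀ hq0 hqp _) (by positivity)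
        _ = p ^ (n - k) * q ^ k := by
            rw [mul_right_comm, ← pow_add]
            congr 2
            omega
  have hinj : ∀ A ∈ F, ∀ B ∈ F, f A = f B → A = B := by
    intro A hA B hB hAB
    have hcompl : ∀ X Y : Finset (Fin n), X ∈ F → Y ∈ F → X ≠ Yᶜ := by
      intro X Y hX hY hXY
      obtain ⟨x, hx⟩ := hF X hX Y hY
      rw [hXY] at hx
      simp [Finset.mem_inter] at hx
    by_cases h1 : n < 2 * A.card <;> by_cases h2 : n < 2 * B.card <;>
      simp only [hf, if_pos, if_neg, h1, h2, if_true, if_false] at hAB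
    · exact hAB
    · exact absurd hAB (hcompl A B hA hB)
    · exact absurd hAB.symm (hcompl B A hB hA)
    · exact compl_injective hAB
  calc ∑ V ∈ F, w V ≤ ∑ V ∈ F, w (f V) := Finset.sum_le_sum (fun V _ => hwle V)
    _ = ∑ V ∈ F.image f, w V := (Finset.sum_image hinj).symm
    _ ≤ ∑ V ∈ Finset.univ.filter (fun V : Finset (Fin n) => n < 2 * V.card), w V := by
        apply Finset.sum_le_sum_of_subset_of_nonneg
        · intro V hV
          simp only [Finset.mem_image] at hV
          obtain ⟨A, _, rfl⟩ := hV
          simp [Finset.mem_filter, hmem A]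
        · intro V _ _
          positivity
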